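/- If X_1, ..., X_N are Bernoulli (0/1-valued) random variables satisfying X_1 + ... + X_N = 1 pointwise, then they are negatively associated: for all disjoint index sets I, J and all functions f, g that are both coordinatewise monotone increasing (or both decreasing), E[f(X_i, i∈I) · g(X_j, j∈J)] ≤ E[f(X_i, i∈I)] · E[g(X_j, j∈J)]. -/

import Mathlib

open MeasureTheory

/-- A family of real random variables is negatively associated if for all disjoint
finite index sets `I, J` and all coordinatewise monotone functions `f, g` (both
increasing, or both decreasing), `E[f·g] ≤ E[f]·E[g]`. -/
def NegativelyAssociated {Ω : Type*} [MeasurableSpace Ω] (μ : Measure Ω)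
    {ι : Type*} (X : ι → Ω → ℝ) : Prop :=
  ∀ (I J : Finset ι), Disjoint I J →
    ∀ (f : ((i : I) → ℝ) → ℝ) (g : ((j : J) → ℝ) → ℝ),
      ((Monotone f ∧ Monotone g) ∨ (Antitone f ∧ Antitone g)) →
      ∫ ω, f (fun i => X i ω) * g (fun j => X j ω) ∂μ ≤
        (∫ ω, f (fun i => X i ω) ∂μ) * (∫ ω, g (fun j => X j ω) ∂μ)


private lemma onehot_apply {ι : Type*} [DecidableEq ι] (x : ι → ℝ) (k : ι) (hk1 : x k = 1)
    (hk0 : ∀ i, i ≠ k → x i = 0) (K : Finset ι) (h : ((i : K) → ℝ) → ℝ) :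
    h (fun i => x ↑i) = h 0 + ∑ i ∈ K.attach,
      (h (fun i' => if i' = i then 1 else 0) - h 0) * x ↑i := by
  by_cases hkK : k ∈ K
  · have harg : (fun i : K => x ↑i) = (fun i' => if i' = (⟨k, hkK⟩ : K) then 1 else 0) := by
      funext i
      by_cases hik : i = (⟨k, hkK⟩ : K)
      · simp [hik, hk1]
      · have hne : (↑i : ι) ≠ k := fun h' => hik (Subtype.ext h')
        simp [hik, hk0 _ hne]
    have hs : ∑ i ∈ K.attach, (h (fun i' => if i' = i then 1 else 0) - h 0) * x ↑i
        = (h (fun i' => if i' = (⟨k, hkK⟩ : K) then 1 else 0) - h 0) := by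
      rw [Finset.sum_eq_single (⟨k, hkK⟩ : K)]
      · simp [hk1]
      · intro i _ hi
        have hne : (↑i : ι) ≠ k := fun h' => hi (Subtype.ext h')
        simp [hk0 _ hne]
      · intro h'; exact absurd (Finset.mem_attach _ _) h'
    rw [harg, hs]; ring
  · have harg : (fun i : K => x ↑i) = 0 := by
      funext i
      exact hk0 _ (fun h' => hkK (h' ▸ i.2))
    have hs : ∑ i ∈ K.attach, (h (fun i' => if i' = i then 1 else 0) - h 0) * x ↑i = 0 := by
      apply Finset.sum_eq_zero
      intro i _
      have hne : (↑i : ι) ≠ k := fun h' => hkK (h' ▸ i.2)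
      simp [hk0 _ hne]
    rw [harg, hs]; ring


/-- Bernoulli (0/1-valued) random variables summing pointwise to `1` are
negatively associated. -/
theorem negativelyAssociated_of_sum_eq_one
    {Ω : Type*} [MeasurableSpace Ω] (μ : Measure Ω) [IsProbabilityMeasure μ]
    (N : ℕ) (X : Fin N → Ω → ℝ)
    (hmeas : ∀ i, Measurable (X i))
    (hBer : ∀ i ω, X i ω = 0 ∨ X i ω = 1)
    (hsum : ∀ ω, ∑ i, X i ω = 1) :
    NegativelyAssociated μ X := by
  intro I J hIJ f g hmono
  -- hot index
  have hot : ∀ ω, ∃ k, X k ω = 1 ∧ ∀ i, i ≠ k → X i ω = 0 := by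
    intro ω
    have h1 := hsum ω
    by_cases h : ∃ k, X k ω = 1
    · obtain ⟨k, hk⟩ := h
      refine ⟨k, hk, ?_⟩
      have hsplit : ∑ i, X i ω = X k ω + ∑ i ∈ Finset.univ.erase k, X i ω :=
        (Finset.add_sum_erase _ _ (Finset.mem_univ k)).symm
      have h0 : ∑ i ∈ Finset.univ.erase k, X i ω = 0 := by
        rw [hsplit, hk] at h1; linarith
      intro i hi
      exact (Finset.sum_eq_zero_iff_of_nonneg
        (fun i _ => by rcases hBer i ω with h'|h' <;> simp [h'])).mp h0 i (by simp [hi])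
    · exfalso
      push_neg at h
      have hz : ∀ i, X i ω = 0 := fun i => (hBer i ω).resolve_right (h i)
      simp [hz] at h1
  -- coefficients
  set c : I → ℝ := fun i => f (fun i' => if i' = i then 1 else 0) - f 0 with hc
  set d : J → ℝ := fun j => g (fun j' => if j' = j then 1 else 0) - g 0 with hd
  -- pointwise formulas
  have hf_pt : ∀ ω, f (fun i => X i ω) = f 0 + ∑ i ∈ I.attach, c i * X ↑i ω := by
    intro ω
    obtain ⟨k, hk1, hk0⟩ := hot ω
    exact onehot_apply (fun i => X i ω) k hk1 (fun i hi => hk0 i hi) I f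
  have hg_pt : ∀ ω, g (fun j => X j ω) = g 0 + ∑ j ∈ J.attach, d j * X ↑j ω := by
    intro ω
    obtain ⟨k, hk1, hk0⟩ := hot ω
    exact onehot_apply (fun i => X i ω) k hk1 (fun i hi => hk0 i hi) J g
  -- product pointwise formula
  have hfg_pt : ∀ ω, f (fun i => X i ω) * g (fun j => X j ω) =
      f 0 * g 0 + g 0 * ∑ i ∈ I.attach, c i * X ↑i ω
        + f 0 * ∑ j ∈ J.attach, d j * X ↑j ω := by
    intro ω
    obtain ⟨k, hk1, hk0⟩ := hot ω
    have hzero : (∑ i ∈ I.attach, c i * X ↑i ω) = 0 ∨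
        (∑ j ∈ J.attach, d j * X ↑j ω) = 0 := by
      by_cases hkI : k ∈ I
      · right
        apply Finset.sum_eq_zero
        intro j _
        have hne : (↑j : Fin N) ≠ k := by
          intro h'
          exact (Finset.disjoint_left.mp hIJ hkI) (h' ▸ j.2)
        simp [hk0 _ hne]
      · left
        apply Finset.sum_eq_zero
        intro i _
        have hne : (↑i : Fin N) ≠ k := fun h' => hkI (h' ▸ i.2)
        simp [hk0 _ hne]
    rw [hf_pt ω, hg_pt ω]
    rcases hzero with h0 | h0 <;> rw [h0] <;> ring
  -- integrability
  have hXint : ∀ i : Fin N, Integrable (X i) μ := by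
    intro i
    refine (integrable_const (1 : ℝ)).mono' (hmeas i).aestronglyMeasurable ?_
    filter_upwards with ω
    rcases hBer i ω with h'|h' <;> simp [h']
  have hEnn : ∀ i : Fin N, 0 ≤ ∫ ω, X i ω ∂μ := by
    intro i
    apply integral_nonneg
    intro ω
    rcases hBer i ω with h'|h' <;> simp [h']
  -- integrals
  have hintI : Integrable (fun ω => ∑ i ∈ I.attach, c i * X ↑i ω) μ :=
    integrable_finset_sum _ (fun i _ => (hXint ↑i).const_mul (c i))
  have hintJ : Integrable (fun ω => ∑ j ∈ J.attach, d j * X ↑j ω) μ :=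
    integrable_finset_sum _ (fun j _ => (hXint ↑j).const_mul (d j))
  have hsumI : ∫ ω, (∑ i ∈ I.attach, c i * X ↑i ω) ∂μ
      = ∑ i ∈ I.attach, c i * ∫ ω, X ↑i ω ∂μ := by
    rw [integral_finset_sum _ (fun (i : I) _ => (hXint ↑i).const_mul (c i))]
    exact Finset.sum_congr rfl (fun i _ => integral_const_mul _ _)
  have hsumJ : ∫ ω, (∑ j ∈ J.attach, d j * X ↑j ω) ∂μ
      = ∑ j ∈ J.attach, d j * ∫ ω, X ↑j ω ∂μ := by
    rw [integral_finset_sum _ (fun (j : J) _ => (hXint ↑j).const_mul (d j))]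
    exact Finset.sum_congr rfl (fun j _ => integral_const_mul _ _)
  have hintf : ∫ ω, f (fun i => X i ω) ∂μ = f 0 + ∑ i ∈ I.attach, c i * ∫ ω, X ↑i ω ∂μ := by
    simp only [hf_pt]
    rw [integral_add (integrable_const _) hintI, integral_const, hsumI]
    simp
  have hintg : ∫ ω, g (fun j => X j ω) ∂μ = g 0 + ∑ j ∈ J.attach, d j * ∫ ω, X ↑j ω ∂μ := by
    simp only [hg_pt]
    rw [integral_add (integrable_const _) hintJ, integral_const, hsumJ]
    simp
  have hintfg : ∫ ω, f (fun i => X i ω) * g (fun j => X j ω) ∂μ =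
      f 0 * g 0 + g 0 * ∑ i ∈ I.attach, c i * ∫ ω, X ↑i ω ∂μ
        + f 0 * ∑ j ∈ J.attach, d j * ∫ ω, X ↑j ω ∂μ := by
    simp only [hfg_pt]
    have h1 : Integrable (fun ω => f 0 * g 0 + g 0 * ∑ i ∈ I.attach, c i * X ↑i ω) μ := by
      exact (integrable_const _).add (hintI.const_mul (g 0))
    rw [integral_add h1 (hintJ.const_mul (f 0)),
      integral_add (integrable_const _) (hintI.const_mul (g 0)),
      integral_const, integral_const_mul, integral_const_mul, hsumI, hsumJ]
    simp
  rw [hintf, hintg, hintfg]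
  set S := ∑ i ∈ I.attach, c i * ∫ ω, X ↑i ω ∂μ with hS
  set T := ∑ j ∈ J.attach, d j * ∫ ω, X ↑j ω ∂μ with hT
  have hST : 0 ≤ S * T := by
    rcases hmono with ⟨hf, hg⟩ | ⟨hf, hg⟩
    · apply mul_nonneg
      · apply Finset.sum_nonneg
        intro i _
        apply mul_nonneg _ (hEnn _)
        have : f 0 ≤ f (fun i' => if i' = i then 1 else 0) := by
          apply hf
          intro i'
          by_cases h' : i' = i <;> simp [h']
        simp only [hc]; linarith
      · apply Finset.sum_nonneg
        intro j _
        apply mul_nonneg _ (hEnn _)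
        have : g 0 ≤ g (fun j' => if j' = j then 1 else 0) := by
          apply hg
          intro j'
          by_cases h' : j' = j <;> simp [h']
        simp only [hd]; linarith
    · have hSle : S ≤ 0 := by
        apply Finset.sum_nonpos
        intro i _
        apply mul_nonpos_of_nonpos_of_nonneg _ (hEnn _)
        have : f (fun i' => if i' = i then 1 else 0) ≤ f 0 := by
          apply hf
          intro i'
          by_cases h' : i' = i <;> simp [h']
        simp only [hc]; linarith
      have hTle : T ≤ 0 := by
        apply Finset.sum_nonpos
        intro j _
        apply mul_nonpos_of_nonpos_of_nonneg _ (hEnn _)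
        have : g (fun j' => if j' = j then 1 else 0) ≤ g 0 := by
          apply hg
          intro j'
          by_cases h' : j' = j <;> simp [h']
        simp only [hd]; linarith
      nlinarith
  nlinarith [hST]
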